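/- For i ∈ ℤ let η_i : ℚ_p → ℂ be η_i(t) = (1 − 1/p)^{−1/2}·p^{−i/2}·1_{|t|_p = p^i}(t). Then for all i, j ∈ ℤ, ⟨𝓕(η_i), η_j⟩ = (1/2π)·∫_0^{2π} ((√p − e^{iθ})/(√p − e^{−iθ}))·e^{−i(i+j)θ} dθ. (Under the isometry sending η_i to z^i on the circle, the additive Fourier transform restricted to unit-invariant functions becomes the unitary operator f(z) ↦ ((√p − z)/(√p − conj z))·f(conj z) on L²(S¹).) -/

import Mathlib

open MeasureTheory Complex
open scoped ENNReal

variable {p : ℕ} [Fact p.Prime]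

/-- The `p`-adic Fourier transform `𝓕f(ξ) = ∫ f(t)·e(tξ) dμ(t)`. -/
noncomputable def padicFourier [MeasurableSpace ℚ_[p]] (μ : Measure ℚ_[p])
    (e : AddChar ℚ_[p] Circle) (f : ℚ_[p] → ℂ) (ξ : ℚ_[p]) : ℂ :=
  ∫ t, f t * (e (t * ξ) : ℂ) ∂μ

/-- The inverse `p`-adic Fourier transform `𝓕⁻¹f(t) = ∫ f(ξ)·e(−tξ) dμ(ξ)`. -/
noncomputable def padicFourierInv [MeasurableSpace ℚ_[p]] (μ : Measure ℚ_[p])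
    (e : AddChar ℚ_[p] Circle) (f : ℚ_[p] → ℂ) (t : ℚ_[p]) : ℂ :=
  ∫ ξ, f ξ * (e (-(t * ξ)) : ℂ) ∂μ

/-- The conductor operator on `ℚ_p`:
`H(φ)(t) = log|t|_p·φ(t) + ∫ log|ξ|_p·(𝓕⁻¹φ)(ξ)·e(tξ) dμ(ξ)`. -/
noncomputable def padicCondOp [MeasurableSpace ℚ_[p]] (μ : Measure ℚ_[p])
    (e : AddChar ℚ_[p] Circle) (φ : ℚ_[p] → ℂ) (t : ℚ_[p]) : ℂ :=
  (Real.log ‖t‖ : ℂ) * φ t +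
    ∫ ξ, (Real.log ‖ξ‖ : ℂ) * padicFourierInv μ e φ ξ * (e (t * ξ) : ℂ) ∂μ

/-- The orthonormal family `η_i(t) = (1 − 1/p)^{−1/2}·p^{−i/2}·1_{|t|_p = p^i}(t)`. -/
noncomputable def eta (i : ℤ) (t : ℚ_[p]) : ℂ :=
  (((1 - 1 / (p : ℝ)) ^ (-(1 / 2 : ℝ)) * (p : ℝ) ^ (-((i : ℝ)) / 2) : ℝ) : ℂ) *
    (if ‖t‖ = (p : ℝ) ^ i then 1 else 0)

namespace PadicProofAux

lemma one_lt_p : (1:ℝ) < p := by exact_mod_cast (Fact.out : p.Prime).one_lt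
lemma p_posR : (0:ℝ) < p := lt_trans one_pos one_lt_p

/-- The closed ball of radius `p^k` in `ℚ_p`. -/
def B (p : ℕ) [Fact p.Prime] (k : ℤ) : Set ℚ_[p] := {x | ‖x‖ ≤ (p:ℝ)^k}

lemma norm_p_zpow (k : ℤ) : ‖((p:ℚ_[p]) ^ k)‖ = (p:ℝ) ^ (-k) := Padic.norm_p_zpow k

lemma toReal_p_zpow (k : ℤ) : ((p:ℝ≥0∞)^k).toReal = (p:ℝ)^k := by
  rcases k with n | n
  · simp
  · simp [zpow_negSucc, ENNReal.toReal_inv]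

omit [Fact p.Prime] in
lemma abs_exp_I (θ : ℝ) : ‖Complex.exp (θ * I)‖ = 1 := norm_exp_ofReal_mul_I θ

lemma B_disj (k : ℤ) : Pairwise (Function.onFun Disjoint
    (fun m : Fin p => (fun x => -((m:ℚ_[p]) * (p:ℚ_[p])^(-k)) + x) ⁻¹' (B p (k-1)))) := by
  intro m m' hmm'
  rw [Function.onFun, Set.disjoint_left]
  rintro x hx hx'
  simp only [Set.mem_preimage, B, Set.mem_setOf_eq] at hx hx'
  have hdiff : ‖((m:ℚ_[p]) - (m':ℚ_[p])) * (p:ℚ_[p])^(-k)‖ ≤ (p:ℝ)^(k-1) := by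
    have : ((m:ℚ_[p]) - (m':ℚ_[p])) * (p:ℚ_[p])^(-k)
        = (-((m':ℚ_[p]) * (p:ℚ_[p])^(-k)) + x) - (-((m:ℚ_[p]) * (p:ℚ_[p])^(-k)) + x) := by ring
    rw [this]
    calc ‖_ - _‖ = ‖(-((m':ℚ_[p]) * (p:ℚ_[p])^(-k)) + x) + -(-((m:ℚ_[p]) * (p:ℚ_[p])^(-k)) + x)‖ := by
          rw [sub_eq_add_neg]
      _ ≤ max ‖(-((m':ℚ_[p]) * (p:ℚ_[p])^(-k)) + x)‖ ‖-(-((m:ℚ_[p]) * (p:ℚ_[p])^(-k)) + x)‖ :=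
          Padic.nonarchimedean _ _
      _ ≤ (p:ℝ)^(k-1) := by rw [norm_neg]; exact max_le hx' hx
  rw [norm_mul, norm_p_zpow, neg_neg] at hdiff
  have hint : ‖(((m:ℤ) - (m':ℤ) : ℤ):ℚ_[p])‖ ≤ (p:ℝ)^(-(1:ℕ):ℤ) := by
    have hpk : (0:ℝ) < (p:ℝ)^k := zpow_pos p_posR _
    have : ‖((m:ℚ_[p]) - (m':ℚ_[p]))‖ ≤ (p:ℝ)^(k-1) / (p:ℝ)^k := by
      rw [le_div_iff₀ hpk]; exact hdiff
    have h2 : (p:ℝ)^(k-1) / (p:ℝ)^k = (p:ℝ)^(-(1:ℕ):ℤ) := by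
      rw [← zpow_sub₀ (ne_of_gt p_posR)]; norm_num
    rw [h2] at this
    convert this using 2
    push_cast; ring
  rw [Padic.norm_int_le_pow_iff_dvd] at hint
  have := Int.eq_zero_of_dvd_of_natAbs_lt_natAbs (by simpa using hint) ?_
  · exact hmm' (by omega)
  · have h1 : (m:ℤ) < p := by exact_mod_cast m.2
    have h2 : (m':ℤ) < p := by exact_mod_cast m'.2
    omega

variable [MeasurableSpace ℚ_[p]] [BorelSpace ℚ_[p]]

lemma measurableSet_B (k : ℤ) : MeasurableSet (B p k) :=
  (isClosed_le continuous_norm continuous_const).measurableSet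

omit [BorelSpace ℚ_[p]] in
lemma compact_B (k : ℤ) : IsCompact (B p k) := by
  have : B p k = Metric.closedBall 0 ((p:ℝ)^k) := by
    ext x; simp [B, Metric.mem_closedBall, dist_eq_norm]
  rw [this]; exact isCompact_closedBall _ _

omit [MeasurableSpace ℚ_[p]] [BorelSpace ℚ_[p]] in
lemma B_union (k : ℤ) :
    B p k = ⋃ m : Fin p, (fun x => -((m:ℚ_[p]) * (p:ℚ_[p])^(-k)) + x) ⁻¹' (B p (k-1)) := by
  have hp0 : (p:ℚ_[p]) ≠ 0 := Nat.cast_ne_zero.2 (Fact.out : p.Prime).ne_zero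
  ext x
  simp only [Set.mem_iUnion, Set.mem_preimage, B, Set.mem_setOf_eq]
  constructor
  · intro hx
    have hz : ‖x * (p:ℚ_[p])^k‖ ≤ 1 := by
      rw [norm_mul, norm_p_zpow]
      calc ‖x‖ * (p:ℝ)^(-k) ≤ (p:ℝ)^k * (p:ℝ)^(-k) := by
            apply mul_le_mul_of_nonneg_right hx (zpow_nonneg p_posR.le _)
        _ = 1 := by rw [← zpow_add₀ (ne_of_gt p_posR), add_neg_cancel, zpow_zero]
    set z : ℤ_[p] := ⟨x * (p:ℚ_[p])^k, hz⟩ with hzdef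
    set m : ℕ := z.appr 1 with hm
    have hmlt : m < p := by simpa using z.appr_lt 1
    refine ⟨⟨m, hmlt⟩, ?_⟩
    have hspec : ‖z - (m:ℤ_[p])‖ ≤ (p:ℝ)^(-(1:ℕ):ℤ) :=
      (PadicInt.norm_le_pow_iff_mem_span_pow _ 1).2 (by simpa using z.appr_spec 1)
    have hpk : (p:ℚ_[p])^k * (p:ℚ_[p])^(-k) = 1 := by
      rw [← zpow_add₀ hp0, add_neg_cancel, zpow_zero]
    have hco : ((z - (m:ℤ_[p]) : ℤ_[p]) : ℚ_[p]) = x * (p:ℚ_[p])^k - m := by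
      push_cast [hzdef]; rfl
    have hcalc : -((↑(⟨m, hmlt⟩ : Fin p):ℚ_[p]) * (p:ℚ_[p])^(-k)) + x
        = ((z - (m:ℤ_[p]) : ℤ_[p]) : ℚ_[p]) * (p:ℚ_[p])^(-k) := by
      rw [hco, sub_mul, mul_assoc, hpk, mul_one]
      push_cast
      ring
    rw [hcalc, norm_mul, norm_p_zpow, neg_neg]
    rw [PadicInt.norm_def] at hspec
    calc ‖((z - (m:ℤ_[p]) : ℤ_[p]) : ℚ_[p])‖ * (p:ℝ)^(k) ≤ (p:ℝ)^(-(1:ℕ):ℤ) * (p:ℝ)^k := by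
          apply mul_le_mul_of_nonneg_right hspec (zpow_nonneg p_posR.le _)
      _ = (p:ℝ)^(k-1) := by rw [← zpow_add₀ (ne_of_gt p_posR)]; ring_nf
  · rintro ⟨m, hm⟩
    have h1 : ‖(m:ℚ_[p]) * (p:ℚ_[p])^(-k)‖ ≤ (p:ℝ)^k := by
      rw [norm_mul, norm_p_zpow, neg_neg]
      have hm1 : ‖((m:Fin p):ℚ_[p])‖ ≤ 1 := by
        have := Padic.norm_int_le_one (p := p) ((m:ℕ):ℤ)
        push_cast at this ⊢
        exact this
      calc ‖((m:Fin p):ℚ_[p])‖ * (p:ℝ)^k ≤ 1 * (p:ℝ)^k :=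
            mul_le_mul_of_nonneg_right hm1 (zpow_nonneg p_posR.le _)
        _ = (p:ℝ)^k := one_mul _
    have h2 : ‖-((m:ℚ_[p]) * (p:ℚ_[p])^(-k)) + x‖ ≤ (p:ℝ)^(k-1) := hm
    have : x = (m:ℚ_[p]) * (p:ℚ_[p])^(-k) + (-((m:ℚ_[p]) * (p:ℚ_[p])^(-k)) + x) := by ring
    rw [this]
    refine le_trans (Padic.nonarchimedean _ _) (max_le h1 (h2.trans ?_))
    exact zpow_le_zpow_right₀ one_lt_p.le (by omega)

variable (μ : Measure ℚ_[p]) [μ.IsAddHaarMeasure]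

lemma meas_B_step (k : ℤ) : μ (B p k) = p * μ (B p (k-1)) := by
  rw [B_union k, measure_iUnion (B_disj k)
    (fun m => (measurable_const_add _) (measurableSet_B _))]
  simp only [measure_preimage_add]
  rw [tsum_fintype]
  simp [Finset.card_univ, mul_comm]

lemma meas_B (hμ : μ {x : ℚ_[p] | ‖x‖ ≤ 1} = 1) (k : ℤ) : μ (B p k) = (p:ℝ≥0∞)^k := by
  have hp0 : (p:ℝ≥0∞) ≠ 0 := by exact_mod_cast (Fact.out : p.Prime).ne_zero
  have hpt : (p:ℝ≥0∞) ≠ ⊤ := ENNReal.natCast_ne_top p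
  have base : μ (B p 0) = 1 := by
    have : B p 0 = {x : ℚ_[p] | ‖x‖ ≤ 1} := by ext x; simp [B]
    rw [this, hμ]
  induction k using Int.induction_on with
  | zero => simpa using base
  | succ k ih =>
      have hstep := meas_B_step (p := p) μ ((k:ℤ)+1)
      simp only [add_sub_cancel_right] at hstep
      rw [hstep, ih, show ((k:ℤ)+1) = 1 + (k:ℤ) by ring,
        ENNReal.zpow_add hp0 hpt, zpow_one]
  | pred k ih =>
      have hstep := meas_B_step (p := p) μ (-(k:ℤ))
      rw [ih] at hstep
      have hcancel : μ (B p (-(k:ℤ)-1)) = (p:ℝ≥0∞)⁻¹ * ((p:ℝ≥0∞) * μ (B p (-(k:ℤ)-1))) := by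
        rw [← mul_assoc, ENNReal.inv_mul_cancel hp0 hpt, one_mul]
      rw [hcancel, ← hstep, ← zpow_neg_one, ← ENNReal.zpow_add hp0 hpt]
      congr 1; ring

variable (e : AddChar ℚ_[p] Circle)

lemma cont_char (he : Continuous e) (ξ : ℚ_[p]) :
    Continuous (fun t : ℚ_[p] => (e (t * ξ) : ℂ)) :=
  continuous_subtype_val.comp (he.comp (continuous_mul_right ξ))

lemma integrableOn_char (he : Continuous e) (ξ : ℚ_[p]) (k : ℤ) :
    IntegrableOn (fun t : ℚ_[p] => (e (t * ξ) : ℂ)) (B p k) μ :=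
  (cont_char e he ξ).continuousOn.integrableOn_compact (compact_B k)

lemma int_char_one (hμ : μ {x : ℚ_[p] | ‖x‖ ≤ 1} = 1) (he1 : ∀ x : ℤ_[p], e (x : ℚ_[p]) = 1)
    (k : ℤ) (ξ : ℚ_[p]) (hξ : ‖ξ‖ ≤ (p:ℝ)^(-k)) :
    ∫ t in B p k, (e (t*ξ) : ℂ) ∂μ = (((p:ℝ)^k : ℝ) : ℂ) := by
  have : ∀ t ∈ B p k, (e (t*ξ) : ℂ) = 1 := by
    intro t ht
    have hnorm : ‖t * ξ‖ ≤ 1 := by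
      rw [norm_mul]
      calc ‖t‖ * ‖ξ‖ ≤ (p:ℝ)^k * (p:ℝ)^(-k) :=
        mul_le_mul ht hξ (norm_nonneg _) (zpow_nonneg p_posR.le _)
        _ = 1 := by rw [← zpow_add₀ (ne_of_gt p_posR), add_neg_cancel, zpow_zero]
    have := he1 ⟨t * ξ, hnorm⟩
    rw [show ((⟨t * ξ, hnorm⟩ : ℤ_[p]) : ℚ_[p]) = t * ξ from rfl] at this
    rw [this]; rfl
  rw [setIntegral_congr_fun (measurableSet_B k) this, setIntegral_const,
    measureReal_def, meas_B μ hμ, toReal_p_zpow]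
  simp

lemma int_char_zero (he1 : ∀ x : ℤ_[p], e (x : ℚ_[p]) = 1)
    (he2 : ∃ x : ℚ_[p], ‖x‖ ≤ p ∧ e x ≠ 1)
    (k : ℤ) (ξ : ℚ_[p]) (hξ : (p:ℝ)^(-k) < ‖ξ‖) :
    ∫ t in B p k, (e (t*ξ) : ℂ) ∂μ = 0 := by
  obtain ⟨x, hx, hex⟩ := he2
  have hx1 : 1 < ‖x‖ := by
    by_contra h
    push_neg at h
    exact hex (by simpa using he1 ⟨x, h⟩)
  have hξ0 : ξ ≠ 0 := by
    intro h; rw [h, norm_zero] at hξ; exact absurd hξ (not_lt.2 (zpow_nonneg p_posR.le _))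
  have hξ' : (p:ℝ)^(-k+1) ≤ ‖ξ‖ := by
    by_contra h
    push_neg at h
    exact absurd ((Padic.norm_le_pow_iff_norm_lt_pow_add_one ξ (-k)).2 (by simpa using h))
      (not_le.2 hξ)
  set t₀ : ℚ_[p] := x / ξ with ht₀
  have ht₀x : t₀ * ξ = x := div_mul_cancel₀ x hξ0
  have hnt₀ : ‖t₀‖ ≤ (p:ℝ)^k := by
    rw [ht₀, norm_div]
    rw [div_le_iff₀ (norm_pos_iff.2 hξ0)]
    calc ‖x‖ ≤ (p:ℝ) := hx
      _ = (p:ℝ)^k * (p:ℝ)^(-k+1) := by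
          rw [← zpow_add₀ (ne_of_gt p_posR)]; norm_num
      _ ≤ (p:ℝ)^k * ‖ξ‖ := by
          apply mul_le_mul_of_nonneg_left hξ' (zpow_nonneg p_posR.le _)
  set f : ℚ_[p] → ℂ := (B p k).indicator (fun t => (e (t*ξ) : ℂ)) with hf
  have hshift : ∀ t, f (t + t₀) = (e x : ℂ) * f t := by
    intro t
    by_cases ht : t ∈ B p k
    · have ht' : t + t₀ ∈ B p k := by
        have := Padic.nonarchimedean t t₀
        exact le_trans this (max_le ht hnt₀)
      rw [hf, Set.indicator_of_mem ht', Set.indicator_of_mem ht]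
      rw [add_mul, ht₀x, AddChar.map_add_eq_mul]
      push_cast
      ring
    · have ht' : t + t₀ ∉ B p k := by
        intro h
        apply ht
        have : t = (t + t₀) + (-t₀) := by ring
        rw [this]
        refine le_trans (Padic.nonarchimedean _ _) (max_le h ?_)
        rwa [norm_neg]
      rw [hf, Set.indicator_of_notMem ht', Set.indicator_of_notMem ht, mul_zero]
  have hinv : ∫ t, f (t + t₀) ∂μ = ∫ t, f t ∂μ := integral_add_right_eq_self f t₀
  simp_rw [hshift, integral_const_mul] at hinv
  have hexC : (e x : ℂ) ≠ 1 := fun h => hex (Subtype.coe_injective h)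
  have hzero : ((e x : ℂ) - 1) * ∫ t, f t ∂μ = 0 := by
    rw [sub_mul, hinv, one_mul, sub_self]
  have hfint : ∫ t, f t ∂μ = 0 := by
    rcases mul_eq_zero.1 hzero with h | h
    · exact absurd (sub_eq_zero.1 h) hexC
    · exact h
  rw [← integral_indicator (measurableSet_B k), ← hf, hfint]

end PadicProofAux

open PadicProofAux Metric in
/-- Evaluation of the circle-side integral. -/
lemma circle_rhs_aux (s : ℝ) (hs : 1 < s) (n : ℤ) :
    (∫ θ in (0:ℝ)..(2*Real.pi),
      (((s:ℂ)) - Complex.exp (θ * I)) / (((s:ℂ)) - Complex.exp (-(θ * I))) *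
        Complex.exp (-((n:ℂ) * θ * I)))
    = if n ≤ 0 then (2*Real.pi) * (((s:ℂ))⁻¹^(-n).toNat * (1 - (((s:ℂ))^2)⁻¹))
      else if n = 1 then -(2*Real.pi) * ((s:ℂ))⁻¹ else 0 := by
  have hs0 : (s:ℂ) ≠ 0 := by
    simp only [ne_eq, Complex.ofReal_eq_zero]; linarith
  have habs : ‖(s:ℂ)‖ = s := by
    rw [Complex.norm_real, Real.norm_eq_abs, abs_of_pos (by linarith)]
  have hsz : ∀ θ : ℝ, (s:ℂ) - Complex.exp (θ * I) ≠ 0 := by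
    intro θ h
    have := norm_exp_ofReal_mul_I θ
    rw [sub_eq_zero] at h
    rw [← h, habs] at this
    linarith
  have hsz' : ∀ θ : ℝ, (s:ℂ) - Complex.exp (-(θ * I)) ≠ 0 := by
    intro θ
    have := hsz (-θ)
    simpa [Complex.ofReal_neg, neg_mul] using this
  by_cases hn : n ≤ 0
  · set m : ℕ := (-n).toNat with hm
    have hmn : ((m:ℤ):ℂ) = -(n:ℂ) := by
      have : (m:ℤ) = -n := Int.toNat_of_nonneg (by omega)
      rw [this]; push_cast; ring
    set f : ℂ → ℂ := fun z => z^m * ((s:ℂ) - z) * (I * s)⁻¹ with hfdef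
    have hd : DifferentiableOn ℂ f (closedBall 0 1) :=
      (((differentiable_pow m).mul ((differentiable_const _).sub differentiable_id)).mul
        (differentiable_const _)).differentiableOn
    have hw : (s:ℂ)⁻¹ ∈ ball (0:ℂ) 1 := by
      simp only [mem_ball, dist_zero_right, norm_inv]
      rw [habs]
      rw [inv_lt_one_iff₀]; right; exact hs
    have cauchy := hd.circleIntegral_sub_inv_smul hw
    have hrw : (∮ z in C(0, 1), (z - (s:ℂ)⁻¹)⁻¹ • f z)
        = ∫ θ in (0:ℝ)..(2*Real.pi),
          (((s:ℂ)) - Complex.exp (θ * I)) / (((s:ℂ)) - Complex.exp (-(θ * I))) *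
            Complex.exp (-((n:ℂ) * θ * I)) := by
      rw [circleIntegral]
      apply intervalIntegral.integral_congr
      intro θ _
      have hz : Complex.exp (θ * I) ≠ 0 := Complex.exp_ne_zero _
      have hzinv : Complex.exp (-(θ * I)) = (Complex.exp (θ * I))⁻¹ := by
        rw [← Complex.exp_neg]
      have hexpm : Complex.exp (-((n:ℂ) * θ * I)) = Complex.exp (θ * I) ^ m := by
        rw [← Complex.exp_nat_mul]
        congr 1
        rw [show -((n:ℂ) * θ * I) = (-(n:ℂ)) * (θ*I) by ring, ← hmn]
        push_cast; ring
      simp only [deriv_circleMap, circleMap, Complex.ofReal_one, one_mul, zero_add, smul_eq_mul,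
        hfdef]
      rw [hexpm, hzinv]
      have hza : Complex.exp (θ * I) - (s:ℂ)⁻¹ ≠ 0 := by
        intro h
        rw [sub_eq_zero] at h
        have := norm_exp_ofReal_mul_I θ
        rw [h, norm_inv, habs] at this
        have : s = 1 := by field_simp at this; linarith [this]
        linarith
      set z := Complex.exp (θ * I) with hzdef
      set w := (s:ℂ) * z - 1 with hwdef
      have e1 : (s:ℂ) - z⁻¹ = w * z⁻¹ := by
        rw [hwdef]; field_simp
      have e2 : z - (s:ℂ)⁻¹ = w * (s:ℂ)⁻¹ := by
        rw [hwdef]; field_simp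
      have cI : I * I⁻¹ = (1:ℂ) := mul_inv_cancel₀ Complex.I_ne_zero
      have cs : (s:ℂ) * (s:ℂ)⁻¹ = 1 := mul_inv_cancel₀ hs0
      rw [e1, e2, div_eq_mul_inv, mul_inv, mul_inv, mul_inv, inv_inv, inv_inv]
      rw [show z * I * (w⁻¹ * (s:ℂ) * (z ^ m * (((s:ℂ)) - z) * (I⁻¹ * ((s:ℂ))⁻¹)))
          = (I * I⁻¹) * ((s:ℂ) * ((s:ℂ))⁻¹) * (z * w⁻¹ * (z ^ m * (((s:ℂ)) - z))) by ring,
        cI, cs, one_mul, one_mul]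
      ring
    rw [← hrw, cauchy]
    simp only [if_pos hn, smul_eq_mul, hfdef]
    field_simp
  · push_neg at hn
    set k : ℕ := (n-1).toNat with hk
    have hkn : ((k:ℤ):ℂ) = (n:ℂ) - 1 := by
      have : (k:ℤ) = n - 1 := Int.toNat_of_nonneg (by omega)
      rw [this]; push_cast; ring
    set g : ℂ → ℂ := fun z => z^k * ((s:ℂ) * z - 1) * (I * ((s:ℂ) - z))⁻¹ with hgdef
    have hd : DifferentiableOn ℂ g (closedBall 0 1) := by
      apply DifferentiableOn.mul
      · exact (((differentiable_pow k).mul (((differentiable_const _).mul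
          differentiable_id).sub (differentiable_const _)))).differentiableOn
      · apply DifferentiableOn.inv
        · exact ((differentiable_const I).mul
            ((differentiable_const _).sub differentiable_id)).differentiableOn
        · intro z hz
          simp only [mem_closedBall, dist_zero_right] at hz
          apply mul_ne_zero Complex.I_ne_zero
          intro h
          rw [sub_eq_zero] at h
          rw [← h] at hz
          rw [habs] at hz
          linarith
    have hw : (0:ℂ) ∈ ball (0:ℂ) 1 := by simp
    have cauchy := hd.circleIntegral_sub_inv_smul hw
    have hsub : (∫ θ in (0:ℝ)..(2*Real.pi),
        (((s:ℂ)) - Complex.exp (θ * I)) / (((s:ℂ)) - Complex.exp (-(θ * I))) *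
          Complex.exp (-((n:ℂ) * θ * I)))
        = ∮ z in C(0, 1), (z - 0)⁻¹ • g z := by
      have h1 := intervalIntegral.integral_comp_sub_left (a := (0:ℝ)) (b := 2*Real.pi)
        (fun θ : ℝ => (((s:ℂ)) - Complex.exp (θ * I)) / (((s:ℂ)) - Complex.exp (-(θ * I))) *
          Complex.exp (-((n:ℂ) * θ * I))) (2*Real.pi)
      rw [sub_self, sub_zero] at h1
      rw [← h1, circleIntegral]
      apply intervalIntegral.integral_congr
      intro θ _
      have hz : Complex.exp (θ * I) ≠ 0 := Complex.exp_ne_zero _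
      have hzinv : Complex.exp (-(θ * I)) = (Complex.exp (θ * I))⁻¹ := by
        rw [← Complex.exp_neg]
      have ha : Complex.exp ((↑(2*Real.pi - θ):ℂ) * I) = Complex.exp (-((θ:ℂ) * I)) := by
        push_cast
        rw [sub_mul, Complex.exp_sub, Complex.exp_two_pi_mul_I, Complex.exp_neg]
        rw [one_div]
      have hb : Complex.exp (-((↑(2*Real.pi - θ):ℂ) * I)) = Complex.exp ((θ:ℂ) * I) := by
        push_cast
        rw [show -((2*(Real.pi:ℂ) - θ) * I) = (θ:ℂ)*I - 2*(Real.pi:ℂ)*I by ring,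
          Complex.exp_sub, Complex.exp_two_pi_mul_I, div_one]
      have hc : Complex.exp (-((n:ℂ) * (↑(2*Real.pi - θ):ℂ) * I))
          = Complex.exp (θ*I) ^ (k+1) := by
        push_cast
        rw [show -((n:ℂ) * (2*(Real.pi:ℂ) - θ) * I)
            = ((-n : ℤ):ℂ) * (2*(Real.pi:ℂ)*I) + (n:ℂ)*((θ:ℂ)*I) by push_cast; ring,
          Complex.exp_add, Complex.exp_int_mul_two_pi_mul_I, one_mul, ← Complex.exp_nat_mul]
        congr 1
        rw [show (((k+1:ℕ)):ℂ) = ((k:ℤ):ℂ) + 1 by push_cast; ring, hkn]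
        ring
      simp only [deriv_circleMap, circleMap, Complex.ofReal_one, one_mul, zero_add, smul_eq_mul,
        hgdef, sub_zero]
      rw [ha, hb, hc, hzinv]
      have hsznn := hsz θ
      field_simp
      ring
    rw [hsub, cauchy]
    have hg0 : g 0 = (0:ℂ)^k * (-1) * (I * (s:ℂ))⁻¹ := by
      simp [hgdef]
    by_cases hk1 : k = 0
    · have hn1 : n = 1 := by omega
      simp only [if_neg (by omega : ¬ n ≤ 0), if_pos hn1, hg0, hk1, pow_zero, smul_eq_mul]
      field_simp
    · have hn1 : n ≠ 1 := by omega
      simp only [if_neg (by omega : ¬ n ≤ 0), if_neg hn1, hg0, zero_pow hk1, smul_eq_mul]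
      ring

open PadicProofAux in
/-- Under the isometry sending `η_i` to `z^i` on the circle, the additive Fourier
transform restricted to unit-invariant functions becomes the unitary operator
`f(z) ↦ ((√p − z)/(√p − conj z))·f(conj z)` on `L²(S¹)`:
`⟨𝓕(η_i), η_j⟩ = (1/2π)·∫_0^{2π} ((√p − e^{iθ})/(√p − e^{−iθ}))·e^{−i(i+j)θ} dθ`. -/
theorem fourier_matrix_elements [MeasurableSpace ℚ_[p]] [BorelSpace ℚ_[p]]
    (μ : Measure ℚ_[p]) [μ.IsAddHaarMeasure] (hμ : μ {x : ℚ_[p] | ‖x‖ ≤ 1} = 1)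
    (e : AddChar ℚ_[p] Circle) (he : Continuous e)
    (he1 : ∀ x : ℤ_[p], e (x : ℚ_[p]) = 1)
    (he2 : ∃ x : ℚ_[p], ‖x‖ ≤ p ∧ e x ≠ 1) (i j : ℤ) :
    (∫ t : ℚ_[p], padicFourier μ e (eta i) t * (starRingEnd ℂ) (eta j t) ∂μ) =
      (1 / (2 * (Real.pi : ℂ))) * ∫ θ in (0 : ℝ)..(2 * Real.pi),
        (((Real.sqrt p : ℂ) - Complex.exp (θ * Complex.I)) /
          ((Real.sqrt p : ℂ) - Complex.exp (-(θ * Complex.I)))) *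
            Complex.exp (-(((i + j : ℤ) : ℂ) * θ * Complex.I)) := by
  classical
  have hp1 : (1:ℝ) < p := one_lt_p
  have hpp : (0:ℝ) < p := p_posR
  have hpne : (p:ℝ) ≠ 0 := ne_of_gt hpp
  have hA : (0:ℝ) < 1 - 1/(p:ℝ) := by
    rw [sub_pos, div_lt_one hpp]; exact hp1
  have hs1 : (1:ℝ) < Real.sqrt p := by
    rw [show (1:ℝ) = Real.sqrt 1 by simp]
    exact Real.sqrt_lt_sqrt (by norm_num) hp1
  set n : ℤ := i + j with hn
  set Ci : ℝ := (1 - 1/(p:ℝ))^(-(1/2:ℝ)) * (p:ℝ)^(-((i:ℝ))/2) with hCi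
  set Cj : ℝ := (1 - 1/(p:ℝ))^(-(1/2:ℝ)) * (p:ℝ)^(-((j:ℝ))/2) with hCj
  have hSmeas : ∀ l : ℤ, MeasurableSet {t : ℚ_[p] | ‖t‖ = (p:ℝ)^l} := fun l =>
    measurable_norm (measurableSet_singleton _)
  have hBsub : ∀ l : ℤ, B p (l-1) ⊆ B p l := fun l t ht =>
    le_trans ht (zpow_le_zpow_right₀ hp1.le (by omega))
  have S_eq : ∀ l : ℤ, {t : ℚ_[p] | ‖t‖ = (p:ℝ)^l} = B p l \ B p (l-1) := by
    intro l
    ext t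
    simp only [Set.mem_setOf_eq, Set.mem_diff, B]
    constructor
    · intro h
      refine ⟨le_of_eq h, ?_⟩
      rw [h]
      exact not_le.2 (zpow_lt_zpow_right₀ hp1 (by omega))
    · rintro ⟨h1, h2⟩
      push_neg at h2
      have ht0 : t ≠ 0 := by
        intro h
        rw [h, norm_zero] at h2
        exact absurd h2 (not_lt.2 (zpow_nonneg hpp.le _))
      obtain hv := Padic.norm_eq_zpow_neg_valuation ht0
      rw [hv] at h1 h2 ⊢
      congr 1
      have hb1 : -t.valuation ≤ l := (zpow_le_zpow_iff_right₀ hp1).1 h1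
      have hb2 : l - 1 < -t.valuation := (zpow_lt_zpow_iff_right₀ hp1).1 h2
      omega
  -- Fourier transform of eta i
  have hfour : ∀ ξ : ℚ_[p], padicFourier μ e (eta i) ξ =
      (Ci:ℂ) * ((∫ t in B p i, (e (t*ξ):ℂ) ∂μ) - ∫ t in B p (i-1), (e (t*ξ):ℂ) ∂μ) := by
    intro ξ
    rw [padicFourier]
    have heq : ∀ t : ℚ_[p], eta i t * (e (t*ξ):ℂ)
        = (Ci:ℂ) * Set.indicator {t : ℚ_[p] | ‖t‖ = (p:ℝ)^i} (fun t => (e (t*ξ):ℂ)) t := by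
      intro t
      by_cases h : ‖t‖ = (p:ℝ)^i
      · rw [_root_.eta, Set.indicator_of_mem (by exact h), if_pos h, hCi]
        ring
      · rw [_root_.eta, Set.indicator_of_notMem (by exact h), if_neg h]
        ring
    simp_rw [heq]
    rw [integral_const_mul, integral_indicator (hSmeas i), S_eq i,
      integral_diff (measurableSet_B (i-1)) (integrableOn_char μ e he ξ i) (hBsub i)]
  -- reduce to an integral over the sphere of radius p^j
  have hind : (fun t => padicFourier μ e (eta i) t * (starRingEnd ℂ) (eta j t))
      = Set.indicator {t : ℚ_[p] | ‖t‖ = (p:ℝ)^j}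
          (fun t => padicFourier μ e (eta i) t * (Cj:ℂ)) := by
    funext t
    by_cases h : ‖t‖ = (p:ℝ)^j
    · rw [Set.indicator_of_mem (by exact h), _root_.eta, if_pos h, hCj]
      simp only [mul_one, map_mul, Complex.conj_ofReal]
    · rw [Set.indicator_of_notMem (by exact h), _root_.eta, if_neg h]
      simp
  rw [hind, integral_indicator (hSmeas j)]
  -- the constant value of the Fourier transform on the sphere
  set K : ℂ := (Ci:ℂ) * ((if n ≤ 0 then (((p:ℝ)^i : ℝ):ℂ) else 0)
      - (if n ≤ 1 then (((p:ℝ)^(i-1) : ℝ):ℂ) else 0)) with hK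
  have hval : ∀ ξ ∈ {t : ℚ_[p] | ‖t‖ = (p:ℝ)^j},
      padicFourier μ e (eta i) ξ * (Cj:ℂ) = K * (Cj:ℂ) := by
    intro ξ hξ
    simp only [Set.mem_setOf_eq] at hξ
    have hI1 : (∫ t in B p i, (e (t*ξ):ℂ) ∂μ)
        = (if n ≤ 0 then (((p:ℝ)^i : ℝ):ℂ) else 0) := by
      by_cases hc : n ≤ 0
      · rw [if_pos hc]
        exact int_char_one μ e hμ he1 i ξ
          (by rw [hξ]; exact zpow_le_zpow_right₀ hp1.le (by omega))
      · rw [if_neg hc]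
        exact int_char_zero μ e he1 he2 i ξ
          (by rw [hξ]; exact zpow_lt_zpow_right₀ hp1 (by omega))
    have hI2 : (∫ t in B p (i-1), (e (t*ξ):ℂ) ∂μ)
        = (if n ≤ 1 then (((p:ℝ)^(i-1) : ℝ):ℂ) else 0) := by
      by_cases hc : n ≤ 1
      · rw [if_pos hc]
        exact int_char_one μ e hμ he1 (i-1) ξ
          (by rw [hξ]; exact zpow_le_zpow_right₀ hp1.le (by omega))
      · rw [if_neg hc]
        exact int_char_zero μ e he1 he2 (i-1) ξ
          (by rw [hξ]; exact zpow_lt_zpow_right₀ hp1 (by omega))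
    rw [hfour ξ, hI1, hI2, hK]
  rw [setIntegral_congr_fun (hSmeas j) hval, setIntegral_const]
  -- measure of the sphere
  have hfin : ∀ l : ℤ, μ (B p l) ≠ ⊤ := by
    intro l
    rw [meas_B μ hμ]
    exact (ENNReal.zpow_lt_top (by exact_mod_cast (Fact.out : p.Prime).ne_zero)
      (ENNReal.natCast_ne_top p) l).ne
  have hmeasS : (μ {t : ℚ_[p] | ‖t‖ = (p:ℝ)^j}).toReal = (p:ℝ)^j - (p:ℝ)^(j-1) := by
    rw [S_eq j, measure_diff (hBsub j) (measurableSet_B (j-1)).nullMeasurableSet (hfin (j-1)),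
      meas_B μ hμ, meas_B μ hμ,
      ENNReal.toReal_sub_of_le (ENNReal.zpow_le_of_le (by exact_mod_cast hp1.le) (by omega))
        ((ENNReal.zpow_lt_top (by exact_mod_cast (Fact.out : p.Prime).ne_zero)
          (ENNReal.natCast_ne_top p) j).ne),
      toReal_p_zpow, toReal_p_zpow]
  rw [measureReal_def, hmeasS]
  -- evaluate the circle integral
  rw [circle_rhs_aux (Real.sqrt p) hs1 n]
  have h2pi : (2*(Real.pi:ℂ)) ≠ 0 := by
    simp only [ne_eq, mul_eq_zero, OfNat.ofNat_ne_zero, false_or, Complex.ofReal_eq_zero]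
    exact Real.pi_ne_zero
  have hsqC : ((Real.sqrt p : ℝ):ℂ)^2 = ((p:ℝ):ℂ) := by
    rw [show ((Real.sqrt p : ℝ):ℂ)^2 = (((Real.sqrt p * Real.sqrt p : ℝ)):ℂ) by push_cast; ring,
      Real.mul_self_sqrt hpp.le]
  -- key exponent computation
  have key : ∀ a b : ℤ, Ci * Cj * ((p:ℝ)^a * (p:ℝ)^b)
      = (1 - 1/(p:ℝ))⁻¹ * (p:ℝ)^((-((i:ℝ))/2) + (-((j:ℝ))/2) + ((a:ℝ) + (b:ℝ))) := by
    intro a b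
    rw [hCi, hCj,
      show (1 - 1/(p:ℝ))^(-(1/2:ℝ)) * (p:ℝ)^(-((i:ℝ))/2)
          * ((1 - 1/(p:ℝ))^(-(1/2:ℝ)) * (p:ℝ)^(-((j:ℝ))/2)) * ((p:ℝ)^a * (p:ℝ)^b)
        = ((1 - 1/(p:ℝ))^(-(1/2:ℝ)) * (1 - 1/(p:ℝ))^(-(1/2:ℝ)))
          * ((p:ℝ)^(-((i:ℝ))/2) * (p:ℝ)^(-((j:ℝ))/2) * ((p:ℝ)^a * (p:ℝ)^b)) by ring,
      ← Real.rpow_add hA, show -(1/2:ℝ) + -(1/2:ℝ) = -1 by norm_num, Real.rpow_neg_one,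
      ← Real.rpow_intCast (p:ℝ) a, ← Real.rpow_intCast (p:ℝ) b,
      ← Real.rpow_add hpp, ← Real.rpow_add hpp, ← Real.rpow_add hpp]
  -- sqrt p powers as rpow
  have hsqrt_rpow : ∀ m : ℕ, (Real.sqrt p)⁻¹ ^ m = (p:ℝ) ^ (-(m:ℝ)/2) := by
    intro m
    rw [Real.sqrt_eq_rpow, ← Real.rpow_neg_one ((p:ℝ) ^ (1/2:ℝ)), ← Real.rpow_natCast _ m,
      ← Real.rpow_mul hpp.le, ← Real.rpow_mul hpp.le]
    congr 1
    ring
  by_cases hc0 : n ≤ 0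
  · -- case n ≤ 0
    set m : ℕ := (-n).toNat with hm
    have hmR : (m:ℝ) = -((n:ℝ)) := by
      have : (m:ℤ) = -n := Int.toNat_of_nonneg (by omega)
      exact_mod_cast congrArg (fun z : ℤ => (z:ℝ)) this
    rw [if_pos hc0, hK, if_pos hc0, if_pos (by omega : n ≤ 1)]
    have hreal : ((p:ℝ)^j - (p:ℝ)^(j-1)) * ((Ci * ((p:ℝ)^i - (p:ℝ)^(i-1))) * Cj)
        = (Real.sqrt p)⁻¹ ^ m * (1 - 1/(p:ℝ)) := by
      have e1 : (p:ℝ)^i - (p:ℝ)^(i-1) = (p:ℝ)^i * (1 - 1/(p:ℝ)) := by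
        rw [zpow_sub_one₀ hpne]
        field_simp
      have e2 : (p:ℝ)^j - (p:ℝ)^(j-1) = (p:ℝ)^j * (1 - 1/(p:ℝ)) := by
        rw [zpow_sub_one₀ hpne]
        field_simp
      rw [e1, e2, hsqrt_rpow m,
        show (p:ℝ)^j * (1 - 1/(p:ℝ)) * ((Ci * ((p:ℝ)^i * (1 - 1/(p:ℝ)))) * Cj)
          = (Ci * Cj * ((p:ℝ)^i * (p:ℝ)^j)) * ((1 - 1/(p:ℝ)) * (1 - 1/(p:ℝ))) by ring,
        key i j,
        show (1 - 1/(p:ℝ))⁻¹ * (p:ℝ)^((-((i:ℝ))/2) + (-((j:ℝ))/2) + ((i:ℝ) + (j:ℝ)))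
            * ((1 - 1/(p:ℝ)) * (1 - 1/(p:ℝ)))
          = (p:ℝ)^((-((i:ℝ))/2) + (-((j:ℝ))/2) + ((i:ℝ) + (j:ℝ)))
            * (((1 - 1/(p:ℝ))⁻¹ * (1 - 1/(p:ℝ))) * (1 - 1/(p:ℝ))) by ring,
        inv_mul_cancel₀ (ne_of_gt hA), one_mul,
        show (-((i:ℝ))/2) + (-((j:ℝ))/2) + ((i:ℝ) + (j:ℝ)) = -((m:ℝ))/2 by
          rw [hmR, hn]; push_cast; ring]
    calc ((p:ℝ)^j - (p:ℝ)^(j-1)) • ((Ci:ℂ) * ((((p:ℝ)^i : ℝ):ℂ) - (((p:ℝ)^(i-1) : ℝ):ℂ)) * (Cj:ℂ))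
        = ((((p:ℝ)^j - (p:ℝ)^(j-1)) * ((Ci * ((p:ℝ)^i - (p:ℝ)^(i-1))) * Cj) : ℝ) : ℂ) := by
          rw [Complex.real_smul]
          push_cast
          ring
      _ = (((Real.sqrt p)⁻¹ ^ m * (1 - 1/(p:ℝ)) : ℝ) : ℂ) := by rw [hreal]
      _ = 1 / (2 * (Real.pi:ℂ)) * (2*Real.pi * ((((Real.sqrt p:ℝ):ℂ))⁻¹^m
            * (1 - ((((Real.sqrt p:ℝ):ℂ))^2)⁻¹))) := by
          rw [show (1:ℂ) / (2 * (Real.pi:ℂ)) * (2*Real.pi * ((((Real.sqrt p:ℝ):ℂ))⁻¹^m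
              * (1 - ((((Real.sqrt p:ℝ):ℂ))^2)⁻¹)))
            = ((2 * (Real.pi:ℂ)) * (2 * (Real.pi:ℂ))⁻¹) * ((((Real.sqrt p:ℝ):ℂ))⁻¹^m
              * (1 - ((((Real.sqrt p:ℝ):ℂ))^2)⁻¹)) by push_cast; ring,
            mul_inv_cancel₀ h2pi, one_mul, hsqC]
          push_cast
          ring
  · by_cases hc1 : n = 1
    · -- case n = 1
      rw [if_neg hc0, if_pos hc1, hK, if_neg hc0, if_pos (by omega : n ≤ 1)]
      have hreal : ((p:ℝ)^j - (p:ℝ)^(j-1)) * ((Ci * (0 - (p:ℝ)^(i-1))) * Cj)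
          = -(Real.sqrt p)⁻¹ := by
        have e2 : (p:ℝ)^j - (p:ℝ)^(j-1) = (p:ℝ)^j * (1 - 1/(p:ℝ)) := by
          rw [zpow_sub_one₀ hpne]
          field_simp
        have h1 : (Real.sqrt p)⁻¹ = (p:ℝ)^(-(1:ℝ)/2) := by
          have := hsqrt_rpow 1
          simpa using this
        rw [e2, h1,
          show (p:ℝ)^j * (1 - 1/(p:ℝ)) * ((Ci * (0 - (p:ℝ)^(i-1))) * Cj)
            = -((Ci * Cj * ((p:ℝ)^(i-1) * (p:ℝ)^j)) * (1 - 1/(p:ℝ))) by ring,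
          key (i-1) j,
          show (1 - 1/(p:ℝ))⁻¹ * (p:ℝ)^((-((i:ℝ))/2) + (-((j:ℝ))/2) + (((i-1:ℤ):ℝ) + (j:ℝ)))
              * (1 - 1/(p:ℝ))
            = (p:ℝ)^((-((i:ℝ))/2) + (-((j:ℝ))/2) + (((i-1:ℤ):ℝ) + (j:ℝ)))
              * ((1 - 1/(p:ℝ))⁻¹ * (1 - 1/(p:ℝ))) by ring,
          inv_mul_cancel₀ (ne_of_gt hA), mul_one,
          show (-((i:ℝ))/2) + (-((j:ℝ))/2) + (((i-1:ℤ):ℝ) + (j:ℝ)) = -(1:ℝ)/2 by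
            have hij : i + j = 1 := by rw [← hn]; exact hc1
            have hijR : (i:ℝ) + (j:ℝ) = 1 := by exact_mod_cast congrArg (Int.cast : ℤ → ℝ) hij
            push_cast
            linarith]
      calc ((p:ℝ)^j - (p:ℝ)^(j-1)) • ((Ci:ℂ) * ((0:ℂ) - (((p:ℝ)^(i-1) : ℝ):ℂ)) * (Cj:ℂ))
          = ((((p:ℝ)^j - (p:ℝ)^(j-1)) * ((Ci * (0 - (p:ℝ)^(i-1))) * Cj) : ℝ) : ℂ) := by
            rw [Complex.real_smul]
            push_cast
            ring
        _ = ((-(Real.sqrt p)⁻¹ : ℝ) : ℂ) := by rw [hreal]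
        _ = 1 / (2 * (Real.pi:ℂ)) * (-(2*Real.pi) * (((Real.sqrt p:ℝ):ℂ))⁻¹) := by
            rw [show (1:ℂ) / (2 * (Real.pi:ℂ)) * (-(2*Real.pi) * (((Real.sqrt p:ℝ):ℂ))⁻¹)
              = -(((2 * (Real.pi:ℂ)) * (2 * (Real.pi:ℂ))⁻¹) * (((Real.sqrt p:ℝ):ℂ))⁻¹) by
                push_cast; ring,
              mul_inv_cancel₀ h2pi, one_mul]
            push_cast
            ring
    · -- case n ≥ 2
      rw [if_neg hc0, if_neg hc1, hK, if_neg hc0, if_neg (by omega : ¬ n ≤ 1)]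
      simp
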